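/- Let 0 < α < 1 and define c : ℝ × ℝ → ℝ by c(x,t) = cos x · ∑_{k=0}^∞ (−1)^k t^(k(1−α)) / Γ(1 + k(1−α)) + sin x · ∑_{k=0}^∞ (−1)^k t^(k(1−α)+2) / Γ(k(1−α)+3) for t ≥ 0. Then (i) c(x,0) = cos x for all x, and (ii) for all x ∈ ℝ and t > 0, ∂c/∂t (x,t) = (1/Γ(1−α)) · ∂/∂t [ ∫₀ᵗ (t−τ)^(−α) · ∂²c/∂x² (x,τ) dτ ] + t sin x, i.e. c satisfies the time-fractional diffusion equation with the Riemann–Liouville fractional time derivative of order α acting on ∂²c/∂x² and source term t sin x. -/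

import Mathlib

open Real MeasureTheory

/-- The exact solution `c(x,t) = E_{1-α}(-t^(1-α)) cos x + t² E_{1-α,3}(-t^(1-α)) sin x`,
written term-by-term as series in `t`. -/
noncomputable def exactSol (α : ℝ) : ℝ × ℝ → ℝ :=
  fun p =>
    Real.cos p.1 *
        (∑' k : ℕ,
          (-1 : ℝ) ^ k * p.2 ^ ((k : ℝ) * (1 - α)) /
            Real.Gamma (1 + (k : ℝ) * (1 - α))) +
      Real.sin p.1 *
        (∑' k : ℕ,
          (-1 : ℝ) ^ k * p.2 ^ ((k : ℝ) * (1 - α) + 2) /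
            Real.Gamma ((k : ℝ) * (1 - α) + 3))

namespace FracAux
open Filter Set

lemma gamma_conv {β x : ℝ} (hβ0 : 0 < β) (hβ1 : β ≤ 1) (hx : 1 ≤ x) :
    x * Real.Gamma x ≤ Real.Gamma (x + β) * (x + β) ^ (1 - β) := by
  have hx0 : 0 < x := lt_of_lt_of_le one_pos hx
  have hxb : 0 < x + β := by linarith
  have hmem1 : x + β ∈ Set.Ioi (0:ℝ) := hxb
  have hmem2 : x + 1 + β ∈ Set.Ioi (0:ℝ) := by simp [Set.mem_Ioi]; linarith
  have hcvx := Real.convexOn_log_Gamma.2 hmem1 hmem2 (le_of_lt hβ0) (by linarith : (0:ℝ) ≤ 1 - β)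
      (by ring : β + (1 - β) = 1)
  have hpt : β • (x + β) + (1 - β) • (x + 1 + β) = x + 1 := by
    simp only [smul_eq_mul]; ring
  rw [hpt] at hcvx
  -- hcvx : log (Γ (x+1)) ≤ β * log (Γ (x+β)) + (1-β) * log (Γ (x+1+β))
  simp only [Function.comp_apply, smul_eq_mul] at hcvx
  have hG1 : Real.Gamma (x + 1) = x * Real.Gamma x := Real.Gamma_add_one hx0.ne'
  have hG2 : Real.Gamma (x + 1 + β) = (x + β) * Real.Gamma (x + β) := by
    rw [show x + 1 + β = (x + β) + 1 by ring, Real.Gamma_add_one hxb.ne']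
  have hGP : 0 < Real.Gamma (x + β) := Real.Gamma_pos_of_pos hxb
  have hGP2 : 0 < Real.Gamma (x + 1) := Real.Gamma_pos_of_pos (by linarith)
  rw [hG2, Real.log_mul hxb.ne' hGP.ne'] at hcvx
  have key : Real.log (Real.Gamma (x+1)) ≤ Real.log (Real.Gamma (x+β) * (x+β) ^ (1-β)) := by
    rw [Real.log_mul hGP.ne' (Real.rpow_pos_of_pos hxb _).ne', Real.log_rpow hxb]
    nlinarith [hcvx]
  have := Real.exp_le_exp.2 key
  rw [Real.exp_log hGP2, Real.exp_log (by positivity)] at this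
  calc x * Real.Gamma x = Real.Gamma (x + 1) := hG1.symm
    _ ≤ _ := this

lemma key_ineq {β b x : ℝ} (hβ0 : 0 < β) (hβ1 : β < 1) (hb : 0 < b) (hx1 : 1 ≤ x)
    (hx2 : (8:ℝ) ^ β⁻¹ * b ≤ x) : b ^ β * (x + β) ^ (1 - β) ≤ x / 4 := by
  have hx0 : 0 < x := lt_of_lt_of_le one_pos hx1
  have hxβ : x ^ β ≥ 8 * b ^ β := by
    have h8 : (0:ℝ) < (8:ℝ) ^ β⁻¹ * b := by positivity
    have := Real.rpow_le_rpow (le_of_lt h8) hx2 hβ0.le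
    rwa [Real.mul_rpow (by positivity) hb.le,
      ← Real.rpow_mul (by norm_num : (0:ℝ) ≤ 8), inv_mul_cancel₀ hβ0.ne', Real.rpow_one] at this
  have h1 : (x + β) ^ (1 - β) ≤ (2*x) ^ (1-β) :=
    Real.rpow_le_rpow (by positivity) (by linarith) (by linarith)
  have h2 : ((2:ℝ)*x) ^ (1-β) = 2 ^ (1-β) * x ^ (1-β) :=
    Real.mul_rpow (by norm_num) hx0.le
  have h3 : (2:ℝ) ^ (1-β) ≤ 2 := by
    nth_rewrite 2 [show (2:ℝ) = 2 ^ (1:ℝ) by simp]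
    exact Real.rpow_le_rpow_of_exponent_le one_le_two (by linarith)
  have h4 : x ^ (1-β) = x / x ^ β := by
    rw [eq_div_iff (Real.rpow_pos_of_pos hx0 β).ne', ← Real.rpow_add hx0]
    simp
  have hbp : 0 < b ^ β := Real.rpow_pos_of_pos hb β
  have h5 : x / x ^ β ≤ x / (8 * b ^ β) :=
    div_le_div_of_nonneg_left hx0.le (by positivity) hxβ
  have h6 : (x+β) ^ (1-β) ≤ 2 * (x / (8 * b^β)) := by
    calc (x+β)^(1-β) ≤ (2*x)^(1-β) := h1
      _ = 2^(1-β) * x^(1-β) := h2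
      _ ≤ 2 * x^(1-β) := by
          have : 0 ≤ x ^ (1-β) := (Real.rpow_pos_of_pos hx0 _).le
          nlinarith
      _ = 2 * (x / x^β) := by rw [h4]
      _ ≤ 2 * (x / (8*b^β)) := by linarith
  calc b^β * (x+β)^(1-β) ≤ b^β * (2 * (x / (8*b^β))) := by nlinarith
    _ = x/4 := by field_simp; ring


lemma summable_master {β c b : ℝ} (hβ0 : 0 < β) (hβ1 : β < 1) (hc : 0 < c) (hb : 0 < b) :
    Summable (fun k : ℕ => ((k:ℝ)+1) * b ^ ((k:ℝ)*β) / Real.Gamma ((k:ℝ)*β + c)) := by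
  apply summable_of_ratio_norm_eventually_le (r := 1/2) (by norm_num)
  have htend : Tendsto (fun k : ℕ => (k:ℝ)*β + c) atTop atTop :=
    tendsto_atTop_add_const_right _ _ (Tendsto.atTop_mul_const hβ0 tendsto_natCast_atTop_atTop)
  filter_upwards [htend.eventually_ge_atTop (max 1 ((8:ℝ)^β⁻¹ * b))] with k hk
  set x : ℝ := (k:ℝ)*β + c with hxdef
  have hx1 : 1 ≤ x := le_trans (le_max_left _ _) hk
  have hx2 : (8:ℝ)^β⁻¹ * b ≤ x := le_trans (le_max_right _ _) hk
  have hx0 : 0 < x := lt_of_lt_of_le one_pos hx1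
  have hxb : 0 < x + β := by linarith
  have hGx : 0 < Real.Gamma x := Real.Gamma_pos_of_pos hx0
  have hGxb : 0 < Real.Gamma (x + β) := Real.Gamma_pos_of_pos hxb
  have hp : 0 < b ^ ((k:ℝ)*β) := Real.rpow_pos_of_pos hb _
  have hq : 0 < (x+β)^(1-β) := Real.rpow_pos_of_pos hxb _
  have hr : 0 < b ^ β := Real.rpow_pos_of_pos hb _
  have harg : ((k:ℝ)+1)*β + c = x + β := by rw [hxdef]; ring
  have hbsplit : b ^ (((k:ℝ)+1)*β) = b ^ ((k:ℝ)*β) * b ^ β := by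
    rw [← Real.rpow_add hb]; ring_nf
  have hG : x * Real.Gamma x / (x+β)^(1-β) ≤ Real.Gamma (x+β) := by
    rw [div_le_iff₀ hq]; exact gamma_conv hβ0 hβ1.le hx1
  have hK := key_ineq hβ0 hβ1 hb hx1 hx2
  rw [Real.norm_eq_abs, Real.norm_eq_abs]
  push_cast
  rw [abs_of_pos (by rw [show ((k:ℝ)+1)*β + c = x + β from harg]; positivity),
    abs_of_pos (by positivity), harg, hbsplit, div_le_iff₀ hGxb]
  have step1 : ((k:ℝ)+1+1) * (b ^ ((k:ℝ)*β) * b ^ β) ≤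
      1/2 * (((k:ℝ)+1) * b ^ ((k:ℝ)*β)) * x / (x+β)^(1-β) := by
    rw [le_div_iff₀ hq]
    have hk0 : (0:ℝ) ≤ (k:ℝ) := Nat.cast_nonneg k
    nlinarith [mul_le_mul_of_nonneg_left hK (by positivity : (0:ℝ) ≤ ((k:ℝ)+1+1) * b ^ ((k:ℝ)*β)),
      mul_nonneg (mul_nonneg hp.le hx0.le) hk0]
  calc ((k:ℝ)+1+1) * (b ^ ((k:ℝ)*β) * b ^ β)
      ≤ 1/2 * (((k:ℝ)+1) * b ^ ((k:ℝ)*β)) * x / (x+β)^(1-β) := step1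
    _ = 1/2 * (((k:ℝ)+1) * b ^ ((k:ℝ)*β)) / Real.Gamma x * (x * Real.Gamma x / (x+β)^(1-β)) := by
        field_simp
    _ ≤ 1/2 * (((k:ℝ)+1) * b ^ ((k:ℝ)*β)) / Real.Gamma x * Real.Gamma (x+β) := by
        apply mul_le_mul_of_nonneg_left hG (by positivity)
    _ = 1/2 * (((k:ℝ)+1) * b ^ ((k:ℝ)*β) / Real.Gamma x) * Real.Gamma (x+β) := by ring


noncomputable def F (β t : ℝ) : ℝ :=
  ∑' k : ℕ, (-1:ℝ)^k * t ^ ((k:ℝ)*β) / Real.Gamma (1 + (k:ℝ)*β)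

noncomputable def G (β t : ℝ) : ℝ :=
  ∑' k : ℕ, (-1:ℝ)^k * t ^ ((k:ℝ)*β + 2) / Real.Gamma ((k:ℝ)*β + 3)

variable {β : ℝ}

lemma summable_shift (hβ0 : 0 < β) (hβ1 : β < 1) {t δ c : ℝ} (ht : 0 < t) (hδ : 0 ≤ δ)
    (hc : 0 < c) :
    Summable (fun k : ℕ => t ^ ((k:ℝ)*β + δ) / Real.Gamma ((k:ℝ)*β + c)) := by
  refine Summable.of_nonneg_of_le (fun k => by positivity) (fun k => ?_)
    ((summable_master hβ0 hβ1 hc ht).mul_left (t ^ δ))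
  have hG : 0 < Real.Gamma ((k:ℝ)*β + c) := Real.Gamma_pos_of_pos (by positivity)
  have h1 : t ^ ((k:ℝ)*β + δ) = t ^ δ * t ^ ((k:ℝ)*β) := by
    rw [← Real.rpow_add ht]; ring_nf
  rw [h1, mul_div_assoc]
  apply mul_le_mul_of_nonneg_left _ (Real.rpow_nonneg ht.le δ)
  rw [mul_div_assoc]
  have : (1:ℝ) ≤ (k:ℝ)+1 := by nlinarith [Nat.cast_nonneg (α := ℝ) k]
  nlinarith [div_nonneg (Real.rpow_nonneg ht.le ((k:ℝ)*β)) hG.le]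

lemma summable_F (hβ0 : 0 < β) (hβ1 : β < 1) {t : ℝ} (ht : 0 < t) :
    Summable (fun k : ℕ => (-1:ℝ)^k * t ^ ((k:ℝ)*β) / Real.Gamma (1 + (k:ℝ)*β)) := by
  apply Summable.of_norm
  refine Summable.of_nonneg_of_le (fun k => norm_nonneg _) (fun k => ?_)
    (summable_shift hβ0 hβ1 ht le_rfl one_pos (δ := 0))
  have hG : 0 < Real.Gamma (1 + (k:ℝ)*β) := Real.Gamma_pos_of_pos (by positivity)
  rw [Real.norm_eq_abs, abs_div, abs_mul, abs_pow, abs_neg, abs_one, one_pow, one_mul,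
    abs_of_pos (Real.rpow_pos_of_pos ht _), abs_of_pos hG, add_comm 1 ((k:ℝ)*β), add_zero]

lemma summable_G (hβ0 : 0 < β) (hβ1 : β < 1) {t : ℝ} (ht : 0 < t) :
    Summable (fun k : ℕ => (-1:ℝ)^k * t ^ ((k:ℝ)*β + 2) / Real.Gamma ((k:ℝ)*β + 3)) := by
  apply Summable.of_norm
  refine Summable.of_nonneg_of_le (fun k => norm_nonneg _) (fun k => ?_)
    (summable_shift hβ0 hβ1 ht (by norm_num) (by norm_num) (δ := 2) (c := 3))
  have hG : 0 < Real.Gamma ((k:ℝ)*β + 3) := Real.Gamma_pos_of_pos (by positivity)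
  rw [Real.norm_eq_abs, abs_div, abs_mul, abs_pow, abs_neg, abs_one, one_pow, one_mul,
    abs_of_pos (Real.rpow_pos_of_pos ht _), abs_of_pos hG]

lemma hasDerivAt_F (hβ0 : 0 < β) (hβ1 : β < 1) {t : ℝ} (ht : 0 < t) :
    ∃ d, HasDerivAt (F β) d t := by
  set b : ℝ := t + 1 with hb
  have hbpos : 0 < b := by positivity
  refine ⟨_, hasDerivAt_tsum_of_isPreconnected
    (u := fun k : ℕ => 2/t*β * (((k:ℝ)+1) * b ^ ((k:ℝ)*β) / Real.Gamma ((k:ℝ)*β + 1)))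
    (g' := fun (k : ℕ) (y : ℝ) => (-1:ℝ)^k * ((k:ℝ)*β * y ^ ((k:ℝ)*β - 1)) / Real.Gamma (1 + (k:ℝ)*β))
    (((summable_master hβ0 hβ1 one_pos hbpos).mul_left _))
    (isOpen_Ioo (a := t/2) (b := b)) isPreconnected_Ioo
    (fun k y hy => ?_) (fun k y hy => ?_)
    (show t ∈ Ioo (t/2) b by constructor <;> [linarith; simp [hb]])
    (summable_F hβ0 hβ1 ht)
    (show t ∈ Ioo (t/2) b by constructor <;> [linarith; simp [hb]])⟩
  · have hy0 : y ≠ 0 := by rcases hy with ⟨h1, _⟩; intro h; rw [h] at h1; linarith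
    exact ((Real.hasDerivAt_rpow_const (Or.inl hy0)).const_mul ((-1:ℝ)^k)).div_const _
  · rcases hy with ⟨hy1, hy2⟩
    have hy0 : 0 < y := lt_trans (by linarith) hy1
    have hG : 0 < Real.Gamma (1 + (k:ℝ)*β) := Real.Gamma_pos_of_pos (by positivity)
    rw [Real.norm_eq_abs, abs_div, abs_mul, abs_pow, abs_neg, abs_one, one_pow, one_mul,
      abs_of_pos hG, abs_of_nonneg (by positivity : (0:ℝ) ≤ (k:ℝ)*β * y ^ ((k:ℝ)*β - 1)),
      add_comm 1 ((k:ℝ)*β)]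
    have h1 : y ^ ((k:ℝ)*β - 1) ≤ 2/t * b ^ ((k:ℝ)*β) := by
      rw [Real.rpow_sub hy0, Real.rpow_one]
      have hnum : y ^ ((k:ℝ)*β) ≤ b ^ ((k:ℝ)*β) :=
        Real.rpow_le_rpow hy0.le hy2.le (by positivity)
      calc y ^ ((k:ℝ)*β) / y ≤ b ^ ((k:ℝ)*β) / (t/2) := by
            apply div_le_div₀ (by positivity) hnum (by linarith) hy1.le
        _ = 2/t * b ^ ((k:ℝ)*β) := by field_simp
    have h2 : (k:ℝ)*β ≤ ((k:ℝ)+1)*β := by nlinarith [Nat.cast_nonneg (α := ℝ) k]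
    calc (k:ℝ)*β * y ^ ((k:ℝ)*β - 1) / Real.Gamma ((k:ℝ)*β + 1)
        ≤ ((k:ℝ)+1)*β * (2/t * b ^ ((k:ℝ)*β)) / Real.Gamma ((k:ℝ)*β + 1) := by
          have hG' : 0 < Real.Gamma ((k:ℝ)*β + 1) := Real.Gamma_pos_of_pos (by positivity)
          exact (div_le_div_iff_of_pos_right hG').2
            (mul_le_mul h2 h1 (by positivity) (by positivity))
      _ = 2/t*β * (((k:ℝ)+1) * b ^ ((k:ℝ)*β) / Real.Gamma ((k:ℝ)*β + 1)) := by ring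


lemma hasDerivAt_G (hβ0 : 0 < β) (hβ1 : β < 1) {t : ℝ} (ht : 0 < t) :
    ∃ d, HasDerivAt (G β) d t := by
  set b : ℝ := t + 1 with hb
  have hbpos : 0 < b := by positivity
  refine ⟨_, hasDerivAt_tsum_of_isPreconnected
    (u := fun k : ℕ => (β+2)*b * (((k:ℝ)+1) * b ^ ((k:ℝ)*β) / Real.Gamma ((k:ℝ)*β + 3)))
    (g' := fun (k : ℕ) (y : ℝ) =>
      (-1:ℝ)^k * (((k:ℝ)*β + 2) * y ^ (((k:ℝ)*β + 2) - 1)) / Real.Gamma ((k:ℝ)*β + 3))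
    (((summable_master hβ0 hβ1 (by norm_num) hbpos).mul_left _))
    (isOpen_Ioo (a := t/2) (b := b)) isPreconnected_Ioo
    (fun k y hy => ?_) (fun k y hy => ?_)
    (show t ∈ Ioo (t/2) b by constructor <;> [linarith; simp [hb]])
    (summable_G hβ0 hβ1 ht)
    (show t ∈ Ioo (t/2) b by constructor <;> [linarith; simp [hb]])⟩
  · have hy0 : y ≠ 0 := by rcases hy with ⟨h1, _⟩; intro h; rw [h] at h1; linarith
    exact ((Real.hasDerivAt_rpow_const (Or.inl hy0)).const_mul ((-1:ℝ)^k)).div_const _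
  · rcases hy with ⟨hy1, hy2⟩
    have hy0 : 0 < y := lt_trans (by linarith) hy1
    have hG3 : 0 < Real.Gamma ((k:ℝ)*β + 3) := Real.Gamma_pos_of_pos (by positivity)
    rw [Real.norm_eq_abs, abs_div, abs_mul, abs_pow, abs_neg, abs_one, one_pow, one_mul,
      abs_of_pos hG3,
      abs_of_nonneg (by positivity : (0:ℝ) ≤ ((k:ℝ)*β + 2) * y ^ (((k:ℝ)*β + 2) - 1))]
    have h1 : y ^ (((k:ℝ)*β + 2) - 1) ≤ b * b ^ ((k:ℝ)*β) := by
      have e : ((k:ℝ)*β + 2) - 1 = (k:ℝ)*β + 1 := by ring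
      rw [e]
      calc y ^ ((k:ℝ)*β + 1) ≤ b ^ ((k:ℝ)*β + 1) :=
            Real.rpow_le_rpow hy0.le hy2.le (by positivity)
        _ = b * b ^ ((k:ℝ)*β) := by
            rw [Real.rpow_add hbpos, Real.rpow_one]; ring
    have h2 : (k:ℝ)*β + 2 ≤ ((k:ℝ)+1)*(β+2) := by nlinarith [Nat.cast_nonneg (α := ℝ) k]
    calc ((k:ℝ)*β + 2) * y ^ (((k:ℝ)*β + 2) - 1) / Real.Gamma ((k:ℝ)*β + 3)
        ≤ ((k:ℝ)+1)*(β+2) * (b * b ^ ((k:ℝ)*β)) / Real.Gamma ((k:ℝ)*β + 3) := by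
          exact (div_le_div_iff_of_pos_right hG3).2
            (mul_le_mul h2 h1 (by positivity) (by positivity))
      _ = (β+2)*b * (((k:ℝ)+1) * b ^ ((k:ℝ)*β) / Real.Gamma ((k:ℝ)*β + 3)) := by ring


lemma intervalIntegrable_kernel_pow {β γ t : ℝ} (hβ0 : 0 < β) (hγ : 0 ≤ γ) (ht : 0 < t) :
    IntervalIntegrable (fun τ => (t - τ) ^ (β-1) * τ ^ γ) volume 0 t := by
  have h0 : IntervalIntegrable (fun x : ℝ => x ^ (β-1)) volume 0 t :=
    intervalIntegral.intervalIntegrable_rpow' (by linarith)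
  have h1 := h0.comp_sub_left t
  rw [sub_zero, sub_self] at h1
  apply h1.symm.mul_continuousOn
  intro τ _
  exact (Real.continuousAt_rpow_const τ γ (Or.inr hγ)).continuousWithinAt

lemma integral_beta {β γ t : ℝ} (hβ0 : 0 < β) (hγ : 0 ≤ γ) (ht : 0 < t) :
    ∫ τ in (0:ℝ)..t, (t - τ) ^ (β-1) * τ ^ γ =
      Real.Gamma β * Real.Gamma (γ+1) / Real.Gamma (γ+1+β) * t ^ (γ+β) := by
  have hre1 : 0 < ((γ:ℂ)+1).re := by simp; linarith
  have hre2 : 0 < ((β:ℂ)).re := by simpa using hβ0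
  have hc := Complex.betaIntegral_scaled ((γ:ℂ)+1) ((β:ℂ)) ht
  have heq : (∫ x in (0:ℝ)..t, (x:ℂ)^((γ:ℂ)+1-1) * ((t:ℂ)-(x:ℂ))^((β:ℂ)-1))
      = ((∫ τ in (0:ℝ)..t, (t-τ)^(β-1) * τ^γ : ℝ) : ℂ) := by
    rw [← intervalIntegral.integral_ofReal,
      intervalIntegral.integral_of_le ht.le, intervalIntegral.integral_of_le ht.le]
    apply setIntegral_congr_fun measurableSet_Ioc
    intro τ hτ
    show (τ:ℂ)^((γ:ℂ)+1-1) * ((t:ℂ)-(τ:ℂ))^((β:ℂ)-1) = _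
    have h1 : ((τ:ℝ):ℂ)^((γ:ℂ)+1-1) = ((τ^γ : ℝ) : ℂ) := by
      rw [show (γ:ℂ)+1-1 = ((γ:ℝ):ℂ) by ring]
      exact (Complex.ofReal_cpow hτ.1.le γ).symm
    have h2 : ((t:ℂ)-(τ:ℂ))^((β:ℂ)-1) = (((t-τ)^(β-1) : ℝ) : ℂ) := by
      rw [show (t:ℂ)-(τ:ℂ) = ((t-τ:ℝ):ℂ) by push_cast; ring,
        show (β:ℂ)-1 = ((β-1:ℝ):ℂ) by push_cast; ring]
      exact (Complex.ofReal_cpow (by linarith [hτ.2] : (0:ℝ) ≤ t - τ) (β-1)).symm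
    rw [h1, h2, ← Complex.ofReal_mul, mul_comm]
  have e1 : ((γ:ℂ)+1) = ((γ+1:ℝ):ℂ) := by push_cast; ring
  have e2 : ((γ:ℂ)+1+(β:ℂ)) = ((γ+1+β:ℝ):ℂ) := by push_cast; ring
  have hGpos : 0 < Real.Gamma (γ+1+β) := Real.Gamma_pos_of_pos (by linarith)
  have hne : ((Real.Gamma (γ+1+β) : ℝ) : ℂ) ≠ 0 := by
    simpa using hGpos.ne'
  have hbeta : Complex.betaIntegral (((γ+1:ℝ)):ℂ) ((β:ℂ))
      = ((Real.Gamma (γ+1) * Real.Gamma β / Real.Gamma (γ+1+β) : ℝ) : ℂ) := by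
    have h := Complex.Gamma_mul_Gamma_eq_betaIntegral hre1 hre2
    rw [e2, e1, Complex.Gamma_ofReal, Complex.Gamma_ofReal, Complex.Gamma_ofReal] at h
    rw [Complex.ofReal_div, Complex.ofReal_mul, eq_div_iff hne]
    linear_combination -h
  apply Complex.ofReal_injective
  rw [← heq, hc, e1, hbeta,
    show (((γ+1:ℝ)):ℂ)+(β:ℂ)-1 = ((γ+β:ℝ):ℂ) by push_cast; ring,
    ← Complex.ofReal_cpow ht.le, ← Complex.ofReal_mul]
  rw [Complex.ofReal_inj]
  ring


lemma Gamma_three : Real.Gamma 3 = 2 := by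
  rw [show (3:ℝ) = (2:ℝ)+1 by norm_num, Real.Gamma_add_one (by norm_num),
    show (2:ℝ) = (1:ℝ)+1 by norm_num, Real.Gamma_add_one one_ne_zero, Real.Gamma_one]
  norm_num

lemma summable_P (hβ0 : 0 < β) (hβ1 : β < 1) {s : ℝ} (hs : 0 < s) :
    Summable (fun k : ℕ => (-1:ℝ)^k * s ^ ((k:ℝ)*β + β) / Real.Gamma ((k:ℝ)*β + β + 1)) := by
  apply Summable.of_norm
  refine Summable.of_nonneg_of_le (fun k => norm_nonneg _) (fun k => ?_)
    (summable_shift hβ0 hβ1 hs hβ0.le (by linarith) (δ := β) (c := β + 1))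
  have hp : 0 < Real.Gamma ((k:ℝ)*β + β + 1) := Real.Gamma_pos_of_pos (by positivity)
  rw [Real.norm_eq_abs, abs_div, abs_mul, abs_pow, abs_neg, abs_one, one_pow, one_mul,
    abs_of_pos (Real.rpow_pos_of_pos hs _), abs_of_pos hp, add_assoc]

lemma summable_Q (hβ0 : 0 < β) (hβ1 : β < 1) {s : ℝ} (hs : 0 < s) :
    Summable (fun k : ℕ => (-1:ℝ)^k * s ^ ((k:ℝ)*β + β + 2) / Real.Gamma ((k:ℝ)*β + β + 3)) := by
  apply Summable.of_norm
  refine Summable.of_nonneg_of_le (fun k => norm_nonneg _) (fun k => ?_)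
    (summable_shift hβ0 hβ1 hs (by linarith) (by linarith) (δ := β + 2) (c := β + 3))
  have hp : 0 < Real.Gamma ((k:ℝ)*β + β + 3) := Real.Gamma_pos_of_pos (by positivity)
  rw [Real.norm_eq_abs, abs_div, abs_mul, abs_pow, abs_neg, abs_one, one_pow, one_mul,
    abs_of_pos (Real.rpow_pos_of_pos hs _), abs_of_pos hp, add_assoc, add_assoc]

lemma tsum_P (hβ0 : 0 < β) (hβ1 : β < 1) {s : ℝ} (hs : 0 < s) :
    ∑' k : ℕ, (-1:ℝ)^k * s ^ ((k:ℝ)*β + β) / Real.Gamma ((k:ℝ)*β + β + 1) = 1 - F β s := by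
  have h0 := Summable.tsum_eq_zero_add (summable_F hβ0 hβ1 hs)
  have hF : F β s = 1 + ∑' k : ℕ,
      (-1:ℝ)^(k+1) * s ^ (((k:ℕ)+1:ℝ)*β) / Real.Gamma (1 + ((k:ℕ)+1:ℝ)*β) := by
    rw [F, h0]
    push_cast
    norm_num
  have hterm : ∀ k : ℕ, (-1:ℝ)^(k+1) * s ^ (((k:ℕ)+1:ℝ)*β) / Real.Gamma (1 + ((k:ℕ)+1:ℝ)*β)
      = -((-1:ℝ)^k * s ^ ((k:ℝ)*β + β) / Real.Gamma ((k:ℝ)*β + β + 1)) := by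
    intro k
    rw [show ((k:ℝ)+1)*β = (k:ℝ)*β + β by ring, show 1 + ((k:ℝ)*β + β) = (k:ℝ)*β + β + 1 by ring]
    ring
  rw [tsum_congr hterm, tsum_neg] at hF
  linarith

lemma tsum_Q (hβ0 : 0 < β) (hβ1 : β < 1) {s : ℝ} (hs : 0 < s) :
    ∑' k : ℕ, (-1:ℝ)^k * s ^ ((k:ℝ)*β + β + 2) / Real.Gamma ((k:ℝ)*β + β + 3)
      = s ^ (2:ℝ) / 2 - G β s := by
  have h0 := Summable.tsum_eq_zero_add (summable_G hβ0 hβ1 hs)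
  have hG : G β s = s ^ (2:ℝ) / 2 + ∑' k : ℕ,
      (-1:ℝ)^(k+1) * s ^ (((k:ℕ)+1:ℝ)*β + 2) / Real.Gamma (((k:ℕ)+1:ℝ)*β + 3) := by
    rw [G, h0]
    push_cast
    norm_num [Gamma_three]
  have hterm : ∀ k : ℕ, (-1:ℝ)^(k+1) * s ^ (((k:ℕ)+1:ℝ)*β + 2) / Real.Gamma (((k:ℕ)+1:ℝ)*β + 3)
      = -((-1:ℝ)^k * s ^ ((k:ℝ)*β + β + 2) / Real.Gamma ((k:ℝ)*β + β + 3)) := by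
    intro k
    rw [show ((k:ℝ)+1)*β + 2 = (k:ℝ)*β + β + 2 by ring,
      show ((k:ℝ)+1)*β + 3 = (k:ℝ)*β + β + 3 by ring]
    ring
  rw [tsum_congr hterm, tsum_neg] at hG
  linarith


lemma integral_eval (hβ0 : 0 < β) (hβ1 : β < 1) {s : ℝ} (hs : 0 < s) (x : ℝ) :
    ∫ τ in (0:ℝ)..s, (s - τ)^(β-1) * (-(Real.cos x * F β τ + Real.sin x * G β τ))
      = -(Real.Gamma β * (Real.cos x * (1 - F β s)
          + Real.sin x * (s^(2:ℝ)/2 - G β s))) := by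
  set c1 : ℕ → ℝ := fun k => -Real.cos x * (-1:ℝ)^k / Real.Gamma (1+(k:ℝ)*β) with hc1
  set c2 : ℕ → ℝ := fun k => -Real.sin x * (-1:ℝ)^k / Real.Gamma ((k:ℝ)*β+3) with hc2
  set h : ℕ → ℝ → ℝ := fun k τ => c1 k * ((s-τ)^(β-1) * τ^((k:ℝ)*β))
      + c2 k * ((s-τ)^(β-1) * τ^((k:ℝ)*β+2)) with hh
  have hGpos : ∀ y : ℝ, 0 < y → 0 < Real.Gamma y := fun y hy => Real.Gamma_pos_of_pos hy
  have I1 : ∀ k:ℕ, IntegrableOn (fun τ => (s-τ)^(β-1) * τ^((k:ℝ)*β)) (Ioc 0 s) volume :=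
    fun k => (intervalIntegrable_iff_integrableOn_Ioc_of_le hs.le).1
      (intervalIntegrable_kernel_pow hβ0 (by positivity) hs)
  have I2 : ∀ k:ℕ, IntegrableOn (fun τ => (s-τ)^(β-1) * τ^((k:ℝ)*β+2)) (Ioc 0 s) volume :=
    fun k => (intervalIntegrable_iff_integrableOn_Ioc_of_le hs.le).1
      (intervalIntegrable_kernel_pow hβ0 (by positivity) hs)
  have hint : ∀ k:ℕ, IntegrableOn (h k) (Ioc 0 s) volume :=
    fun k => (((I1 k).const_mul (c1 k)).add ((I2 k).const_mul (c2 k)))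
  have V1 : ∀ k:ℕ, ∫ τ in Ioc (0:ℝ) s, (s-τ)^(β-1)*τ^((k:ℝ)*β)
      = Real.Gamma β * Real.Gamma ((k:ℝ)*β+1)/Real.Gamma ((k:ℝ)*β+1+β) * s^((k:ℝ)*β+β) := by
    intro k
    rw [← intervalIntegral.integral_of_le hs.le]
    exact integral_beta hβ0 (by positivity) hs
  have V2 : ∀ k:ℕ, ∫ τ in Ioc (0:ℝ) s, (s-τ)^(β-1)*τ^((k:ℝ)*β+2)
      = Real.Gamma β * Real.Gamma ((k:ℝ)*β+2+1)/Real.Gamma ((k:ℝ)*β+2+1+β) * s^((k:ℝ)*β+2+β) := by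
    intro k
    rw [← intervalIntegral.integral_of_le hs.le]
    exact integral_beta hβ0 (by positivity) hs
  -- summability of norm integrals
  have hw : Summable (fun k : ℕ => Real.Gamma β * (s^((k:ℝ)*β+β)/Real.Gamma ((k:ℝ)*β+(1+β)))
      + Real.Gamma β * (s^((k:ℝ)*β+(2+β))/Real.Gamma ((k:ℝ)*β+(3+β)))) :=
    ((summable_shift hβ0 hβ1 hs hβ0.le (by linarith)).mul_left _).add
      ((summable_shift hβ0 hβ1 hs (by linarith) (by linarith)).mul_left _)
  have hbound : ∀ k : ℕ, (∫ τ in Ioc (0:ℝ) s, ‖h k τ‖)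
      ≤ Real.Gamma β * (s^((k:ℝ)*β+β)/Real.Gamma ((k:ℝ)*β+(1+β)))
        + Real.Gamma β * (s^((k:ℝ)*β+(2+β))/Real.Gamma ((k:ℝ)*β+(3+β))) := by
    intro k
    have hc1abs : |c1 k| ≤ 1 / Real.Gamma (1+(k:ℝ)*β) := by
      rw [hc1]
      have hg := hGpos (1+(k:ℝ)*β) (by positivity)
      simp only [abs_div, abs_mul, abs_neg, abs_pow, abs_one, one_pow, mul_one, abs_of_pos hg]
      exact (div_le_div_iff_of_pos_right hg).2 (Real.abs_cos_le_one x)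
    have hc2abs : |c2 k| ≤ 1 / Real.Gamma ((k:ℝ)*β+3) := by
      rw [hc2]
      have hg := hGpos ((k:ℝ)*β+3) (by positivity)
      simp only [abs_div, abs_mul, abs_neg, abs_pow, abs_one, one_pow, mul_one, abs_of_pos hg]
      exact (div_le_div_iff_of_pos_right hg).2 (Real.abs_sin_le_one x)
    have step1 : (∫ τ in Ioc (0:ℝ) s, ‖h k τ‖)
        ≤ ∫ τ in Ioc (0:ℝ) s, (|c1 k| * ((s-τ)^(β-1) * τ^((k:ℝ)*β))
            + |c2 k| * ((s-τ)^(β-1) * τ^((k:ℝ)*β+2))) := by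
      apply setIntegral_mono_on (hint k).norm
        (((I1 k).const_mul _).add ((I2 k).const_mul _)) measurableSet_Ioc
      intro τ hτ
      have hk1 : 0 ≤ (s-τ)^(β-1) * τ^((k:ℝ)*β) := by
        apply mul_nonneg (Real.rpow_nonneg (by linarith [hτ.2]) _) (Real.rpow_nonneg hτ.1.le _)
      have hk2 : 0 ≤ (s-τ)^(β-1) * τ^((k:ℝ)*β+2) := by
        apply mul_nonneg (Real.rpow_nonneg (by linarith [hτ.2]) _) (Real.rpow_nonneg hτ.1.le _)
      calc ‖h k τ‖ ≤ ‖c1 k * ((s-τ)^(β-1) * τ^((k:ℝ)*β))‖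
            + ‖c2 k * ((s-τ)^(β-1) * τ^((k:ℝ)*β+2))‖ := norm_add_le _ _
        _ = |c1 k| * ((s-τ)^(β-1) * τ^((k:ℝ)*β)) + |c2 k| * ((s-τ)^(β-1) * τ^((k:ℝ)*β+2)) := by
            rw [Real.norm_eq_abs, Real.norm_eq_abs, abs_mul (c1 k) _, abs_mul (c2 k) _,
              abs_of_nonneg hk1, abs_of_nonneg hk2]
    have step2 : (∫ τ in Ioc (0:ℝ) s, (|c1 k| * ((s-τ)^(β-1) * τ^((k:ℝ)*β))
            + |c2 k| * ((s-τ)^(β-1) * τ^((k:ℝ)*β+2))))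
        = |c1 k| * (Real.Gamma β * Real.Gamma ((k:ℝ)*β+1)/Real.Gamma ((k:ℝ)*β+1+β) * s^((k:ℝ)*β+β))
          + |c2 k| * (Real.Gamma β * Real.Gamma ((k:ℝ)*β+2+1)/Real.Gamma ((k:ℝ)*β+2+1+β)
              * s^((k:ℝ)*β+2+β)) := by
      rw [integral_add ((I1 k).const_mul _) ((I2 k).const_mul _),
        integral_const_mul, integral_const_mul, V1 k, V2 k]
    refine step1.trans (step2.trans_le ?_)
    have e1 : (1/Real.Gamma (1+(k:ℝ)*β)) *
        (Real.Gamma β * Real.Gamma ((k:ℝ)*β+1)/Real.Gamma ((k:ℝ)*β+1+β) * s^((k:ℝ)*β+β))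
        = Real.Gamma β * (s^((k:ℝ)*β+β)/Real.Gamma ((k:ℝ)*β+(1+β))) := by
      rw [add_comm 1 ((k:ℝ)*β), show (k:ℝ)*β+1+β = (k:ℝ)*β+(1+β) by ring]
      have h1 := hGpos ((k:ℝ)*β+1) (by positivity)
      have h2 := hGpos ((k:ℝ)*β+(1+β)) (by positivity)
      field_simp
    have e2 : (1/Real.Gamma ((k:ℝ)*β+3)) *
        (Real.Gamma β * Real.Gamma ((k:ℝ)*β+2+1)/Real.Gamma ((k:ℝ)*β+2+1+β) * s^((k:ℝ)*β+2+β))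
        = Real.Gamma β * (s^((k:ℝ)*β+(2+β))/Real.Gamma ((k:ℝ)*β+(3+β))) := by
      rw [show (k:ℝ)*β+2+1+β = (k:ℝ)*β+(3+β) by ring, show (k:ℝ)*β+2+1 = (k:ℝ)*β+3 by ring,
        show (k:ℝ)*β+2+β = (k:ℝ)*β+(2+β) by ring]
      have h1 := hGpos ((k:ℝ)*β+3) (by positivity)
      have h2 := hGpos ((k:ℝ)*β+(3+β)) (by positivity)
      field_simp
    have m1 : 0 ≤ Real.Gamma β * Real.Gamma ((k:ℝ)*β+1)/Real.Gamma ((k:ℝ)*β+1+β) * s^((k:ℝ)*β+β) := by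
      have := hGpos β hβ0; have := hGpos ((k:ℝ)*β+1) (by positivity)
      have := hGpos ((k:ℝ)*β+1+β) (by positivity)
      positivity
    have m2 : 0 ≤ Real.Gamma β * Real.Gamma ((k:ℝ)*β+2+1)/Real.Gamma ((k:ℝ)*β+2+1+β) * s^((k:ℝ)*β+2+β) := by
      have := hGpos β hβ0; have := hGpos ((k:ℝ)*β+2+1) (by positivity)
      have := hGpos ((k:ℝ)*β+2+1+β) (by positivity)
      positivity
    calc |c1 k| * _ + |c2 k| * _
        ≤ (1/Real.Gamma (1+(k:ℝ)*β)) * _ + (1/Real.Gamma ((k:ℝ)*β+3)) * _ :=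
          add_le_add (mul_le_mul_of_nonneg_right hc1abs m1)
            (mul_le_mul_of_nonneg_right hc2abs m2)
      _ = _ := by rw [e1, e2]
  have hsum : Summable (fun k : ℕ => ∫ τ in Ioc (0:ℝ) s, ‖h k τ‖) :=
    Summable.of_nonneg_of_le (fun k => integral_nonneg (fun τ => norm_nonneg _)) hbound hw
  have hswap := MeasureTheory.integral_tsum_of_summable_integral_norm
    (μ := volume.restrict (Ioc (0:ℝ) s)) (F := h) hint hsum
  -- pointwise identity of integrands on Ioc
  have hpt : ∀ τ ∈ Ioc (0:ℝ) s,
      (s - τ)^(β-1) * (-(Real.cos x * F β τ + Real.sin x * G β τ)) = ∑' k, h k τ := by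
    intro τ hτ
    have hτ0 : 0 < τ := hτ.1
    have hA := summable_F hβ0 hβ1 hτ0
    have hB := summable_G hβ0 hβ1 hτ0
    have hterm : ∀ k:ℕ, h k τ
        = (-Real.cos x * (s-τ)^(β-1)) * ((-1:ℝ)^k * τ^((k:ℝ)*β)/Real.Gamma (1+(k:ℝ)*β))
          + (-Real.sin x * (s-τ)^(β-1)) * ((-1:ℝ)^k * τ^((k:ℝ)*β+2)/Real.Gamma ((k:ℝ)*β+3)) := by
      intro k; rw [hh, hc1, hc2]; ring
    rw [tsum_congr hterm, Summable.tsum_add (hA.mul_left _) (hB.mul_left _), tsum_mul_left, tsum_mul_left]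
    rw [show (∑' k:ℕ, (-1:ℝ)^k * τ^((k:ℝ)*β)/Real.Gamma (1+(k:ℝ)*β)) = F β τ from rfl,
      show (∑' k:ℕ, (-1:ℝ)^k * τ^((k:ℝ)*β+2)/Real.Gamma ((k:ℝ)*β+3)) = G β τ from rfl]
    ring
  rw [intervalIntegral.integral_of_le hs.le, setIntegral_congr_fun measurableSet_Ioc hpt,
    ← hswap]
  -- evaluate the individual integrals
  have hval : ∀ k:ℕ, (∫ τ in Ioc (0:ℝ) s, h k τ)
      = (-Real.cos x * Real.Gamma β) * ((-1:ℝ)^k * s^((k:ℝ)*β+β)/Real.Gamma ((k:ℝ)*β+β+1))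
        + (-Real.sin x * Real.Gamma β) * ((-1:ℝ)^k * s^((k:ℝ)*β+β+2)/Real.Gamma ((k:ℝ)*β+β+3)) := by
    intro k
    rw [hh]
    rw [integral_add ((I1 k).const_mul _) ((I2 k).const_mul _),
      integral_const_mul, integral_const_mul, V1 k, V2 k]
    simp only [hc1, hc2]
    have h1 := hGpos ((k:ℝ)*β+1) (by positivity)
    have h2 := hGpos ((k:ℝ)*β+β+1) (by positivity)
    have h3 := hGpos ((k:ℝ)*β+3) (by positivity)
    have h4 := hGpos ((k:ℝ)*β+β+3) (by positivity)
    rw [add_comm 1 ((k:ℝ)*β), show (k:ℝ)*β+1+β = (k:ℝ)*β+β+1 by ring,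
      show (k:ℝ)*β+2+1+β = (k:ℝ)*β+β+3 by ring, show (k:ℝ)*β+2+1 = (k:ℝ)*β+3 by ring,
      show (k:ℝ)*β+2+β = (k:ℝ)*β+β+2 by ring]
    field_simp
  rw [tsum_congr hval,
    Summable.tsum_add ((summable_P hβ0 hβ1 hs).mul_left _) ((summable_Q hβ0 hβ1 hs).mul_left _),
    tsum_mul_left, tsum_mul_left, tsum_P hβ0 hβ1 hs, tsum_Q hβ0 hβ1 hs]
  ring


lemma iterated (A B x : ℝ) :
    iteratedDeriv 2 (fun y => Real.cos y * A + Real.sin y * B) x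
      = -(Real.cos x * A + Real.sin x * B) := by
  have h1 : deriv (fun y => Real.cos y * A + Real.sin y * B)
      = fun y => -Real.sin y * A + Real.cos y * B := by
    funext y
    exact (((Real.hasDerivAt_cos y).mul_const A).add
      ((Real.hasDerivAt_sin y).mul_const B)).deriv
  rw [show (2:ℕ) = 1+1 from rfl, iteratedDeriv_succ, iteratedDeriv_one, h1]
  have h2 : HasDerivAt (fun y => -Real.sin y * A + Real.cos y * B)
      (-Real.cos x * A + -Real.sin x * B) x := by
    have hs : HasDerivAt (fun y => -Real.sin y * A) (-Real.cos x * A) x := by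
      simpa using (Real.hasDerivAt_sin x).neg.mul_const A
    exact hs.add ((Real.hasDerivAt_cos x).mul_const B)
  rw [h2.deriv]; ring

end FracAux

theorem exactSol_solves_fractional_pde (α : ℝ) (hα0 : 0 < α) (hα1 : α < 1) :
    (∀ x : ℝ, exactSol α (x, 0) = Real.cos x) ∧
    (∀ x t : ℝ, 0 < t →
      deriv (fun s => exactSol α (x, s)) t =
        (1 / Real.Gamma (1 - α)) *
            deriv (fun s => ∫ τ in (0:ℝ)..s,
              (s - τ) ^ (-α) * iteratedDeriv 2 (fun y => exactSol α (y, τ)) x) t +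
          t * Real.sin x) := by
  have hβ0 : 0 < 1 - α := by linarith
  have hβ1 : 1 - α < 1 := by linarith
  constructor
  · intro x
    have h1 : (∑' k:ℕ, (-1:ℝ)^k * (0:ℝ)^((k:ℝ)*(1-α))/Real.Gamma (1+(k:ℝ)*(1-α))) = 1 := by
      rw [tsum_eq_single 0 ?_]
      · norm_num
      · intro k hk
        have hkpos : (0:ℝ) < (k:ℝ) := by exact_mod_cast Nat.pos_of_ne_zero hk
        rw [Real.zero_rpow (by positivity : (k:ℝ)*(1-α) ≠ 0)]
        simp
    have h2 : (∑' k:ℕ, (-1:ℝ)^k * (0:ℝ)^((k:ℝ)*(1-α)+2)/Real.Gamma ((k:ℝ)*(1-α)+3)) = 0 := by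
      have hz : ∀ k:ℕ, (-1:ℝ)^k * (0:ℝ)^((k:ℝ)*(1-α)+2)/Real.Gamma ((k:ℝ)*(1-α)+3) = 0 := by
        intro k
        rw [Real.zero_rpow (by positivity : (k:ℝ)*(1-α)+2 ≠ 0)]
        simp
      rw [tsum_congr hz, tsum_zero]
    show Real.cos x * _ + Real.sin x * _ = Real.cos x
    rw [h1, h2]
    ring
  · intro x t ht
    obtain ⟨dF, hdF⟩ := FracAux.hasDerivAt_F hβ0 hβ1 ht
    obtain ⟨dG, hdG⟩ := FracAux.hasDerivAt_G hβ0 hβ1 ht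
    have hL : HasDerivAt (fun s => exactSol α (x,s))
        (Real.cos x * dF + Real.sin x * dG) t := by
      have he : (fun s => exactSol α (x,s))
          = fun s => Real.cos x * FracAux.F (1-α) s + Real.sin x * FracAux.G (1-α) s := rfl
      rw [he]
      exact (hdF.const_mul _).add (hdG.const_mul _)
    have hfun : (fun s => ∫ τ in (0:ℝ)..s,
          (s - τ) ^ (-α) * iteratedDeriv 2 (fun y => exactSol α (y, τ)) x)
        = fun s => ∫ τ in (0:ℝ)..s, (s - τ)^((1-α)-1) *
            (-(Real.cos x * FracAux.F (1-α) τ + Real.sin x * FracAux.G (1-α) τ)) := by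
      funext s
      refine intervalIntegral.integral_congr (fun τ _ => ?_)
      have he : (fun y => exactSol α (y, τ))
          = fun y => Real.cos y * FracAux.F (1-α) τ + Real.sin y * FracAux.G (1-α) τ := rfl
      rw [he, FracAux.iterated, show (1-α)-1 = -α by ring]
    have hev : (fun s : ℝ => ∫ τ in (0:ℝ)..s, (s - τ)^((1-α)-1) *
          (-(Real.cos x * FracAux.F (1-α) τ + Real.sin x * FracAux.G (1-α) τ)))
        =ᶠ[nhds t] (fun s => -(Real.Gamma (1-α) * (Real.cos x * (1 - FracAux.F (1-α) s)
          + Real.sin x * (s^(2:ℝ)/2 - FracAux.G (1-α) s)))) := by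
      filter_upwards [Ioi_mem_nhds ht] with s hs
      exact FracAux.integral_eval hβ0 hβ1 hs x
    have hD2 : HasDerivAt (fun s : ℝ => -(Real.Gamma (1-α) * (Real.cos x * (1 - FracAux.F (1-α) s)
          + Real.sin x * (s^(2:ℝ)/2 - FracAux.G (1-α) s))))
        (-(Real.Gamma (1-α) * (Real.cos x * (0 - dF)
          + Real.sin x * ((2:ℝ)*t^((2:ℝ)-1)/2 - dG)))) t := by
      have hsq : HasDerivAt (fun s : ℝ => s^(2:ℝ)/2) ((2:ℝ)*t^((2:ℝ)-1)/2) t :=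
        (Real.hasDerivAt_rpow_const (Or.inl ht.ne')).div_const 2
      exact ((((hasDerivAt_const t (1:ℝ)).sub hdF).const_mul (Real.cos x)).add
        ((hsq.sub hdG).const_mul (Real.sin x))).const_mul (Real.Gamma (1-α)) |>.neg
    rw [hL.deriv, hfun, Filter.EventuallyEq.deriv_eq hev, hD2.deriv,
      show ((2:ℝ)-1) = 1 by norm_num, Real.rpow_one]
    have hΓ : Real.Gamma (1-α) ≠ 0 := (Real.Gamma_pos_of_pos hβ0).ne'
    field_simp
    ring
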